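/- If X ≥ 0 has E[X²] < ∞, then F̄(x)·σ²(x) → 0 as x → ∞, where σ²(x) = Var(X - x | X > x) and F̄(x) = P(X > x) > 0 for all x. -/

import Mathlib

open MeasureTheory Set Filter

/-- If `E[X²] < ∞` then `F̄(x) σ²(x) → 0` as `x → ∞`, where `σ²(x)` is the
residual variance `Var(X - x | X > x)`. -/
theorem stmt7 {Ω : Type*} [MeasurableSpace Ω] (μ : Measure Ω) [IsProbabilityMeasure μ]
    (X : Ω → ℝ) (hXm : Measurable X) (hX0 : ∀ ω, 0 ≤ X ω)
    (hX2 : Integrable (fun ω => (X ω) ^ 2) μ)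
    (Fbar : ℝ → ℝ) (hFbar : ∀ x, Fbar x = (μ {ω | x < X ω}).toReal)
    (hpos : ∀ x, 0 < Fbar x)
    (e σ2 : ℝ → ℝ)
    (he : ∀ x, e x = (∫ ω in {ω | x < X ω}, (X ω - x) ∂μ) / Fbar x)
    (hσ2 : ∀ x, σ2 x =
      (∫ ω in {ω | x < X ω}, (X ω - x) ^ 2 ∂μ) / Fbar x - (e x) ^ 2) :
    Tendsto (fun x => Fbar x * σ2 x) atTop (nhds 0) := by
  set s : ℝ → Set Ω := fun x => {ω | x < X ω} with hs
  have hms : ∀ x, MeasurableSet (s x) := fun x => measurableSet_lt measurable_const hXm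
  have hXL2 : MemLp X 2 μ :=
    (memLp_two_iff_integrable_sq hXm.aestronglyMeasurable).mpr hX2
  -- integrability facts on restricted measures
  have hL2 : ∀ x c : ℝ, MemLp (fun ω => X ω - c) 2 (μ.restrict (s x)) := fun x c =>
    (hXL2.restrict (s x)).sub (memLp_const c)
  have hint_sq : ∀ x c : ℝ, Integrable (fun ω => (X ω - c) ^ 2) (μ.restrict (s x)) :=
    fun x c => (hL2 x c).integrable_sq
  have hint : ∀ x c : ℝ, Integrable (fun ω => X ω - c) (μ.restrict (s x)) :=
    fun x c => (hL2 x c).integrable one_le_two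
  -- the key identity : Fbar x * σ2 x = ∫_{s x} (X - x - e x)^2
  have key : ∀ x, Fbar x * σ2 x = ∫ ω in s x, (X ω - x - e x) ^ 2 ∂μ := by
    intro x
    have hF : Fbar x = (μ (s x)).toReal := hFbar x
    have hFne : Fbar x ≠ 0 := (hpos x).ne'
    have hB : ∫ ω in s x, (X ω - x) ∂μ = e x * Fbar x := by
      rw [he x]; field_simp; rfl
    have hf1 : Integrable (fun ω => (X ω - x) ^ 2 - 2 * e x * (X ω - x))
        (μ.restrict (s x)) := by
      exact (hint_sq x x).sub ((hint x x).const_mul (2 * e x))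
    have step : ∫ ω in s x, (X ω - x - e x) ^ 2 ∂μ
        = ∫ ω in s x, ((X ω - x) ^ 2 - 2 * e x * (X ω - x)) + e x ^ 2 ∂μ :=
      integral_congr_ae (Filter.Eventually.of_forall fun ω => by ring)
    rw [step, integral_add hf1 (integrable_const _),
      integral_sub (hint_sq x x) ((hint x x).const_mul _),
      integral_const_mul, hB, setIntegral_const, smul_eq_mul, measureReal_def, ← hF, hσ2 x]
    field_simp
    ring
  -- upper bound by the tail integral of X^2
  have upper : ∀ x, 0 ≤ x → Fbar x * σ2 x ≤ ∫ ω in s x, X ω ^ 2 ∂μ := by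
    intro x hx
    have h1 : Fbar x * σ2 x ≤ ∫ ω in s x, (X ω - x) ^ 2 ∂μ := by
      rw [hσ2 x]
      have hid : Fbar x * ((∫ ω in s x, (X ω - x) ^ 2 ∂μ) / Fbar x - e x ^ 2)
          = (∫ ω in s x, (X ω - x) ^ 2 ∂μ) - Fbar x * e x ^ 2 := by
        have hFne : Fbar x ≠ 0 := (hpos x).ne'
        field_simp
      rw [hid]
      nlinarith [sq_nonneg (e x), (hpos x).le, mul_nonneg (hpos x).le (sq_nonneg (e x))]
    refine h1.trans ?_
    refine setIntegral_mono_on (hint_sq x x) ((hint_sq x 0).congr ?_) (hms x) ?_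
    · filter_upwards with ω; ring_nf
    · intro ω hω
      simp only [hs, mem_setOf_eq] at hω
      nlinarith [hX0 ω]
  have lower : ∀ x, 0 ≤ Fbar x * σ2 x := by
    intro x
    rw [key x]
    exact setIntegral_nonneg (hms x) fun ω _ => sq_nonneg _
  -- the tail integral of X^2 tends to 0
  have tail : Tendsto (fun x => ∫ ω in s x, X ω ^ 2 ∂μ) atTop (nhds 0) := by
    have heq : ∀ x, ∫ ω in s x, X ω ^ 2 ∂μ
        = ∫ ω, (s x).indicator (fun ω => X ω ^ 2) ω ∂μ := fun x =>
      (integral_indicator (hms x)).symm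
    simp only [heq]
    have : Tendsto (fun x : ℝ => ∫ ω, (s x).indicator (fun ω => X ω ^ 2) ω ∂μ)
        atTop (nhds (∫ ω, (0 : ℝ) ∂μ)) := by
      refine tendsto_integral_filter_of_dominated_convergence (fun ω => X ω ^ 2) ?_ ?_ hX2 ?_
      · filter_upwards with x
        exact ((hXm.pow_const 2).indicator (hms x)).aestronglyMeasurable
      · filter_upwards with x
        filter_upwards with ω
        by_cases hω : ω ∈ s x
        · rw [indicator_of_mem hω]; rw [Real.norm_eq_abs, abs_of_nonneg (sq_nonneg _)]
        · rw [indicator_of_notMem hω]; simp [sq_nonneg]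
      · filter_upwards with ω
        refine Tendsto.congr' ?_ tendsto_const_nhds
        filter_upwards [eventually_ge_atTop (X ω)] with x hx
        rw [indicator_of_notMem]
        simp only [hs, mem_setOf_eq, not_lt]
        exact hx
    simpa using this
  refine tendsto_of_tendsto_of_tendsto_of_le_of_le' tendsto_const_nhds tail ?_ ?_
  · filter_upwards with x using lower x
  · filter_upwards [eventually_ge_atTop (0:ℝ)] with x hx using upper x hx
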